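/- Let R = ℂ[[u,v,x,y]]/(uv − g₀g₁⋯g_m) where g₀,…,g_m ∈ ℂ[[x,y]] are nonzero and pairwise without common irreducible factors with u. Then the R-module quotient (u, G)/(u, g₀G, G g_m, G v), where G = g₁g₂⋯g_{m−1}, is isomorphic as an R-module to ℂ[[u,v,x,y]]/(u, v, g₀, g_m). In particular its ℂ-dimension equals dim_ℂ ℂ[[x,y]]/(g₀,g_m). -/

import Mathlib

set_option maxHeartbeats 1000000
set_option synthInstance.maxHeartbeats 400000
open MvPowerSeries

/-- The formal power series ring `ℂ[[x,y]]`. -/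
noncomputable abbrev Bxy : Type := MvPowerSeries (Fin 2) ℂ

/-- The formal power series ring `ℂ[[u,v,x,y]]`, realised as `(ℂ[[x,y]])[[u,v]]`,
with `u = X 0` and `v = X 1`. -/
noncomputable abbrev Auvxy : Type := MvPowerSeries (Fin 2) Bxy

/-- The inclusion `ℂ[[x,y]] → ℂ[[u,v,x,y]]`. -/
noncomputable def cb : Bxy →+* Auvxy := MvPowerSeries.C

instance : IsDomain Bxy := NoZeroDivisors.to_isDomain _
instance : IsDomain Auvxy := NoZeroDivisors.to_isDomain _

theorem X_prime' {σ : Type*} [DecidableEq σ] {R : Type*} [CommRing R] [IsDomain R] (s : σ) :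
    Prime (MvPowerSeries.X s : MvPowerSeries σ R) := by
  refine ⟨?_, ?_, ?_⟩
  · intro h
    have := congrArg (coeff (Finsupp.single s 1)) h
    simp [coeff_X] at this
  · intro h
    have h2 := isUnit_constantCoeff _ h
    rw [constantCoeff_X] at h2
    exact not_isUnit_zero h2
  · intro a b hab
    by_contra hcon
    push_neg at hcon
    obtain ⟨hA, hB⟩ := hcon
    rw [X_dvd_iff] at hA hB
    push_neg at hA hB
    obtain ⟨dA, hdA, hcA⟩ := hA
    obtain ⟨dB, hdB, hcB⟩ := hB
    set a₀ : MvPowerSeries σ R := fun d => if d s = 0 then coeff d a else 0 with ha₀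
    set b₀ : MvPowerSeries σ R := fun d => if d s = 0 then coeff d b else 0 with hb₀
    have key : ∀ d : σ →₀ ℕ, coeff d a₀ = if d s = 0 then coeff d a else 0 := fun d => rfl
    have keyb : ∀ d : σ →₀ ℕ, coeff d b₀ = if d s = 0 then coeff d b else 0 := fun d => rfl
    have hmul : a₀ * b₀ = 0 := by
      ext d
      rw [coeff_mul, map_zero]
      by_cases hds : d s = 0
      · rw [← X_dvd_iff.mp hab d hds, coeff_mul]
        refine Finset.sum_congr rfl fun p hp => ?_
        rw [Finset.HasAntidiagonal.mem_antidiagonal] at hp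
        have hsum : p.1 s + p.2 s = d s := by rw [← Finsupp.add_apply, hp]
        have h1 : p.1 s = 0 := by omega
        have h2 : p.2 s = 0 := by omega
        rw [key, keyb, if_pos h1, if_pos h2]
      · refine Finset.sum_eq_zero fun p hp => ?_
        rw [Finset.HasAntidiagonal.mem_antidiagonal] at hp
        have hsum : p.1 s + p.2 s = d s := by rw [← Finsupp.add_apply, hp]
        by_cases h1 : p.1 s = 0
        · rw [keyb, if_neg (by omega), mul_zero]
        · rw [key, if_neg h1, zero_mul]
    have ha0 : a₀ ≠ 0 := fun h => hcA (by
      have := congrArg (coeff dA) h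
      rwa [key, if_pos hdA, map_zero] at this)
    have hb0 : b₀ ≠ 0 := fun h => hcB (by
      have := congrArg (coeff dB) h
      rwa [keyb, if_pos hdB, map_zero] at this)
    exact (mul_ne_zero ha0 hb0) hmul

theorem sub_const_mem {R : Type*} [CommRing R] (f : MvPowerSeries (Fin 2) R) :
    f - C (constantCoeff f) ∈
      Ideal.span {(X 0 : MvPowerSeries (Fin 2) R), X 1} := by
  set c := constantCoeff f with hc
  set f₁ : MvPowerSeries (Fin 2) R := fun d => if d 0 = 0 then 0 else f d with hf₁
  have key1 : ∀ d : Fin 2 →₀ ℕ, coeff d f₁ = if d 0 = 0 then 0 else f d := fun d => rfl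
  have h1 : (X 0 : MvPowerSeries (Fin 2) R) ∣ f₁ := by
    rw [X_dvd_iff]
    intro d hd
    rw [key1, if_pos hd]
  have h2 : (X 1 : MvPowerSeries (Fin 2) R) ∣ (f - C c - f₁) := by
    rw [X_dvd_iff]
    intro d hd
    rw [map_sub, map_sub, key1, coeff_C]
    by_cases hd0 : d 0 = 0
    · have hdz : d = 0 := by
        ext i
        fin_cases i
        · exact hd0
        · exact hd
      rw [if_pos hdz, if_pos hd0, coeff_apply, hdz, hc]
      have : f 0 = coeff 0 f := rfl
      rw [this, coeff_zero_eq_constantCoeff]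
      ring
    · have hdz : ¬ d = 0 := fun h => hd0 (by rw [h]; rfl)
      rw [if_neg hdz, if_neg hd0, coeff_apply]
      ring
  have heq : f - C c = f₁ + (f - C c - f₁) := by ring
  obtain ⟨t1, ht1⟩ := h1
  obtain ⟨t2, ht2⟩ := h2
  rw [heq, ht2, ht1]
  exact Ideal.add_mem _ (Ideal.mul_mem_right _ _ (Ideal.subset_span (by simp)))
    (Ideal.mul_mem_right _ _ (Ideal.subset_span (by simp)))

theorem prod_decomp {M : Type*} [CommMonoid M] {m : ℕ} (hm : 0 < m) (g : Fin (m + 1) → M) :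
    ∏ i, g i = g 0 * (∏ i ∈ Finset.Ioo (0 : Fin (m + 1)) (Fin.last m), g i) * g (Fin.last m) := by
  have h0last : (0 : Fin (m+1)) ≠ Fin.last m := by
    simp [Fin.ext_iff, Fin.val_last]
    omega
  have hset : (Finset.univ : Finset (Fin (m + 1))) =
      insert 0 (insert (Fin.last m) (Finset.Ioo (0 : Fin (m+1)) (Fin.last m))) := by
    ext i
    have hi := i.isLt
    simp only [Finset.mem_univ, Finset.mem_insert, Finset.mem_Ioo, Fin.ext_iff, Fin.lt_def,
      Fin.val_last, Fin.val_zero, true_iff]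
    omega
  have h1 : (0 : Fin (m+1)) ∉ insert (Fin.last m) (Finset.Ioo (0 : Fin (m+1)) (Fin.last m)) := by
    simp only [Finset.mem_insert, Finset.mem_Ioo]
    rintro (h | ⟨h, -⟩)
    · exact h0last h
    · exact lt_irrefl _ h
  have h2 : Fin.last m ∉ Finset.Ioo (0 : Fin (m+1)) (Fin.last m) := by simp
  rw [hset, Finset.prod_insert h1, Finset.prod_insert h2]
  rw [mul_comm (g (Fin.last m)) _, ← mul_assoc]


set_option maxHeartbeats 8000000

/-- For `R = ℂ[[u,v,x,y]]/(uv − g₀g₁⋯g_m)`, with `g₀,…,g_m ∈ ℂ[[x,y]]` nonzero and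
without common non-unit factors with `u`, the `R`-module quotient of ideals
`(u, G)/(u, g₀G, G g_m, G v)` with `G = g₁⋯g_{m−1}` is isomorphic as an `R`-module to
`ℂ[[u,v,x,y]]/(u, v, g₀, g_m)`; in particular its `ℂ`-dimension equals
`dim_ℂ ℂ[[x,y]]/(g₀, g_m)`. -/
theorem stmt3 (m : ℕ) (g : Fin (m + 1) → Bxy)
    (hg : ∀ i, g i ≠ 0)
    (hcop : ∀ i, ∀ d : Auvxy, ¬ IsUnit d → d ∣ (MvPowerSeries.X 0 : Auvxy) → ¬ d ∣ cb (g i)) :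
    let J : Ideal Auvxy :=
      Ideal.span {MvPowerSeries.X 0 * MvPowerSeries.X 1 - cb (∏ i, g i)}
    let R := Auvxy ⧸ J
    let mk : Auvxy →+* R := Ideal.Quotient.mk J
    let G : Bxy := ∏ i ∈ Finset.Ioo (0 : Fin (m + 1)) (Fin.last m), g i
    let I₁ : Ideal R := Ideal.span {mk (MvPowerSeries.X 0), mk (cb G)}
    let I₂ : Ideal R := Ideal.span {mk (MvPowerSeries.X 0), mk (cb (g 0 * G)),
      mk (cb (G * g (Fin.last m))), mk (cb G * MvPowerSeries.X 1)}
    Nonempty ((I₁ ⧸ Submodule.comap I₁.subtype I₂) ≃ₗ[R]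
        (R ⧸ Ideal.span {mk (MvPowerSeries.X 0), mk (MvPowerSeries.X 1),
          mk (cb (g 0)), mk (cb (g (Fin.last m)))})) ∧
      (Module.rank ℂ (I₁ ⧸ Submodule.comap I₁.subtype I₂)).toENat =
        (Module.rank ℂ (Bxy ⧸ Ideal.span {g 0, g (Fin.last m)})).toENat := by
  intro J R mk G I₁ I₂
  have hJdef : J = Ideal.span {MvPowerSeries.X 0 * MvPowerSeries.X 1 - cb (∏ i, g i)} := rfl
  have hGdef : G = ∏ i ∈ Finset.Ioo (0 : Fin (m + 1)) (Fin.last m), g i := rfl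
  have hI₁def : I₁ = Ideal.span {mk (MvPowerSeries.X 0), mk (cb G)} := rfl
  have hI₂def : I₂ = Ideal.span {mk (MvPowerSeries.X 0), mk (cb (g 0 * G)),
      mk (cb (G * g (Fin.last m))), mk (cb G * MvPowerSeries.X 1)} := rfl
  -- basic facts
  have hXprime : Prime (MvPowerSeries.X 0 : Auvxy) := X_prime' 0
  have hndvd : ¬ (MvPowerSeries.X 0 : Auvxy) ∣ cb G := by
    intro h
    rw [hGdef, map_prod] at h
    obtain ⟨i, _, hdvd⟩ := hXprime.exists_mem_finset_dvd h
    exact hcop i _ hXprime.not_unit dvd_rfl hdvd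
  -- the big ideals
  set K' : Ideal Auvxy :=
    Ideal.span {MvPowerSeries.X 0, MvPowerSeries.X 1, cb (g 0), cb (g (Fin.last m))} with hK'def
  set K : Ideal R := Ideal.span {mk (MvPowerSeries.X 0), mk (MvPowerSeries.X 1),
    mk (cb (g 0)), mk (cb (g (Fin.last m)))} with hKdef
  have hX0K' : (MvPowerSeries.X 0 : Auvxy) ∈ K' := Ideal.subset_span (by simp)
  have hX1K' : (MvPowerSeries.X 1 : Auvxy) ∈ K' := Ideal.subset_span (by simp)
  have hg0K' : cb (g 0) ∈ K' := Ideal.subset_span (by simp)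
  have hgmK' : cb (g (Fin.last m)) ∈ K' := Ideal.subset_span (by simp)
  have hJK' : J ≤ K' := by
    rw [hJdef, Ideal.span_le, Set.singleton_subset_iff]
    have hdvd : g 0 ∣ ∏ i, g i := Finset.dvd_prod_of_mem g (Finset.mem_univ 0)
    obtain ⟨t, ht⟩ := hdvd
    show MvPowerSeries.X 0 * MvPowerSeries.X 1 - cb (∏ i, g i) ∈ K'
    rw [ht, map_mul]
    exact sub_mem (Ideal.mul_mem_right _ _ hX0K') (Ideal.mul_mem_right _ _ hg0K')
  have hKmap : Ideal.map mk K' = K := by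
    rw [hK'def, hKdef, Ideal.map_span]
    congr 1
    simp [Set.image_insert_eq]
  -- the generator of I₁/I₂
  have hGI₁ : mk (cb G) ∈ I₁ := by
    rw [hI₁def]
    exact Ideal.subset_span (by simp)
  set G' : I₁ := ⟨mk (cb G), hGI₁⟩ with hG'def
  set I₂' : Submodule R I₁ := Submodule.comap I₁.subtype I₂ with hI₂'def
  set f : R →ₗ[R] I₁ ⧸ I₂' :=
    I₂'.mkQ.comp (LinearMap.toSpanSingleton R I₁ G') with hfdef
  have hfapply : ∀ r : R, f r = Submodule.Quotient.mk (r • G') := fun r => rfl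
  have hmem_iff : ∀ r : R, r • G' ∈ I₂' ↔ r * mk (cb G) ∈ I₂ := fun r => Iff.rfl
  -- surjectivity
  have hsurj : Function.Surjective f := by
    intro z
    obtain ⟨⟨x, hx⟩, rfl⟩ := Submodule.Quotient.mk_surjective _ z
    obtain ⟨a, b, hab⟩ := Ideal.mem_span_pair.mp (hI₁def ▸ hx)
    refine ⟨b, ?_⟩
    rw [hfapply, Submodule.Quotient.eq]
    show ((b • G' - ⟨x, hx⟩ : I₁) : R) ∈ I₂
    have hval : ((b • G' - ⟨x, hx⟩ : I₁) : R) = b * mk (cb G) - x := rfl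
    rw [hval, ← hab]
    have : b * mk (cb G) - (a * mk (MvPowerSeries.X 0) + b * mk (cb G))
        = -(a * mk (MvPowerSeries.X 0)) := by ring
    rw [this]
    refine neg_mem (Ideal.mul_mem_left _ _ ?_)
    rw [hI₂def]
    exact Ideal.subset_span (by simp)
  -- kernel
  have hker : LinearMap.ker f = K := by
    apply le_antisymm
    · -- hard direction
      intro r hr
      obtain ⟨a, rfl⟩ := Ideal.Quotient.mk_surjective r
      rw [LinearMap.mem_ker, hfapply, Submodule.Quotient.mk_eq_zero] at hr
      rw [hmem_iff, hI₂def] at hr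
      rw [Ideal.mem_span_insert] at hr
      obtain ⟨z₁, y₁, hy₁, heq₁⟩ := hr
      rw [Ideal.mem_span_insert] at hy₁
      obtain ⟨z₂, y₂, hy₂, heq₂⟩ := hy₁
      rw [Ideal.mem_span_insert] at hy₂
      obtain ⟨z₃, y₃, hy₃, heq₃⟩ := hy₂
      rw [Ideal.mem_span_singleton'] at hy₃
      obtain ⟨z₄, heq₄⟩ := hy₃
      obtain ⟨w₁, rfl⟩ := Ideal.Quotient.mk_surjective z₁
      obtain ⟨w₂, rfl⟩ := Ideal.Quotient.mk_surjective z₂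
      obtain ⟨w₃, rfl⟩ := Ideal.Quotient.mk_surjective z₃
      obtain ⟨w₄, rfl⟩ := Ideal.Quotient.mk_surjective z₄
      have hmkeq : mk (a * cb G) = mk (w₁ * MvPowerSeries.X 0 + (w₂ * cb (g 0 * G)
          + (w₃ * cb (G * g (Fin.last m)) + w₄ * (cb G * MvPowerSeries.X 1)))) := by
        rw [map_mul, heq₁, heq₂, heq₃, ← heq₄]
        simp only [map_add, map_mul]
        rfl
      rw [Ideal.Quotient.mk_eq_mk_iff_sub_mem, hJdef, Ideal.mem_span_singleton'] at hmkeq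
      obtain ⟨z₅, hz₅⟩ := hmkeq
      suffices hsuf : a ∈ K' by
        rw [← hKmap]
        exact Ideal.mem_map_of_mem _ hsuf
      by_cases hm : m = 0
      · subst hm
        have hG1 : G = 1 := by
          rw [hGdef]
          have : Fin.last 0 = (0 : Fin 1) := rfl
          rw [this, Finset.Ioo_self, Finset.prod_empty]
        have hP0 : (∏ i, g i) = g 0 := by
          exact Fin.prod_univ_one g
        rw [hG1, hP0] at hz₅
        simp only [map_one, mul_one, one_mul] at hz₅
        have ha : a = z₅ * (MvPowerSeries.X 0 * MvPowerSeries.X 1 - cb (g 0))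
            + (w₁ * MvPowerSeries.X 0 + (w₂ * cb (g 0)
            + (w₃ * cb (g (Fin.last 0)) + w₄ * MvPowerSeries.X 1))) := by
          linear_combination -hz₅
        rw [ha]
        refine add_mem (Ideal.mul_mem_left _ _ (sub_mem (Ideal.mul_mem_right _ _ hX0K') hg0K'))
          (add_mem (Ideal.mul_mem_left _ _ hX0K') (add_mem (Ideal.mul_mem_left _ _ hg0K')
          (add_mem (Ideal.mul_mem_left _ _ hgmK') (Ideal.mul_mem_left _ _ hX1K'))))
      · have hm' : 0 < m := Nat.pos_of_ne_zero hm
        have hP : cb (∏ i, g i) = cb (g 0) * cb G * cb (g (Fin.last m)) := by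
          rw [prod_decomp hm' g, map_mul, map_mul, hGdef]
        rw [hP] at hz₅
        have h2 : cb (g 0 * G) = cb (g 0) * cb G := map_mul _ _ _
        have h3 : cb (G * g (Fin.last m)) = cb G * cb (g (Fin.last m)) := map_mul _ _ _
        have hDG : cb G * (a - w₂ * cb (g 0) - w₃ * cb (g (Fin.last m))
            - w₄ * MvPowerSeries.X 1 + z₅ * (cb (g 0) * cb (g (Fin.last m))))
            = MvPowerSeries.X 0 * (w₁ + z₅ * MvPowerSeries.X 1) := by
          linear_combination -hz₅ + w₂ * h2 + w₃ * h3
        have hdX : (MvPowerSeries.X 0 : Auvxy) ∣ cb G * (a - w₂ * cb (g 0)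
            - w₃ * cb (g (Fin.last m)) - w₄ * MvPowerSeries.X 1
            + z₅ * (cb (g 0) * cb (g (Fin.last m)))) := Dvd.intro _ hDG.symm
        rcases hXprime.2.2 _ _ hdX with hd | hd
        · exact absurd hd hndvd
        · obtain ⟨t, ht⟩ := hd
          have ha : a = MvPowerSeries.X 0 * t + w₂ * cb (g 0) + w₃ * cb (g (Fin.last m))
              + w₄ * MvPowerSeries.X 1 - z₅ * (cb (g 0) * cb (g (Fin.last m))) := by
            linear_combination ht
          rw [ha]
          refine sub_mem (add_mem (add_mem (add_mem (Ideal.mul_mem_right _ _ hX0K')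
            (Ideal.mul_mem_left _ _ hg0K')) (Ideal.mul_mem_left _ _ hgmK'))
            (Ideal.mul_mem_left _ _ hX1K')) (Ideal.mul_mem_left _ _
            (Ideal.mul_mem_right _ _ hg0K'))
    · -- easy direction
      rw [hKdef, Ideal.span_le]
      intro x hx
      simp only [Set.mem_insert_iff, Set.mem_singleton_iff] at hx
      have hmem : ∀ y : R, y * mk (cb G) ∈ I₂ → y ∈ LinearMap.ker f := by
        intro y hy
        rw [LinearMap.mem_ker, hfapply, Submodule.Quotient.mk_eq_zero, hmem_iff]
        exact hy
      rcases hx with rfl | rfl | rfl | rfl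
      · refine hmem _ ?_
        rw [hI₂def]
        exact Ideal.mul_mem_right _ _ (Ideal.subset_span (by simp))
      · refine hmem _ ?_
        rw [hI₂def]
        have : mk (MvPowerSeries.X 1) * mk (cb G) = mk (cb G * MvPowerSeries.X 1) := by
          rw [map_mul, mul_comm]
        rw [this]
        exact Ideal.subset_span (by simp)
      · refine hmem _ ?_
        rw [hI₂def]
        have : mk (cb (g 0)) * mk (cb G) = mk (cb (g 0 * G)) := by rw [map_mul, map_mul]
        rw [this]
        exact Ideal.subset_span (by simp)
      · refine hmem _ ?_
        rw [hI₂def]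
        have : mk (cb (g (Fin.last m))) * mk (cb G) = mk (cb (G * g (Fin.last m))) := by
          rw [map_mul, map_mul, mul_comm]
        rw [this]
        exact Ideal.subset_span (by simp)
  -- the R-linear equivalence
  have e1 : (I₁ ⧸ I₂') ≃ₗ[R] (R ⧸ K) :=
    (f.quotKerEquivOfSurjective hsurj).symm.trans (Submodule.quotEquivOfEq _ _ hker)
  refine ⟨⟨e1⟩, ?_⟩
  -- algebra equivalences for the rank computation
  have hKmapₐ : K = Ideal.map (Ideal.Quotient.mkₐ ℂ J) K' := by
    rw [← hKmap]
    rfl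
  have e2 : (R ⧸ K) ≃ₐ[ℂ] (Auvxy ⧸ K') :=
    (Ideal.quotientEquivAlgOfEq ℂ hKmapₐ).trans (DoubleQuot.quotQuotEquivQuotOfLEₐ ℂ hJK')
  set Q : Ideal Bxy := Ideal.span {g 0, g (Fin.last m)} with hQdef
  have e3 : (Auvxy ⧸ K') ≃ₐ[ℂ] (Bxy ⧸ Q) := by
    let ψ : Auvxy →ₐ[ℂ] Bxy ⧸ Q :=
      { toRingHom := (Ideal.Quotient.mk Q).comp (constantCoeff : Auvxy →+* Bxy)
        commutes' := by
          intro c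
          show Ideal.Quotient.mk Q (constantCoeff (algebraMap ℂ Auvxy c)) = _
          rw [MvPowerSeries.algebraMap_apply, constantCoeff_C, Ideal.Quotient.mk_algebraMap] }
    have hψ : ∀ x : Auvxy, ψ x = Ideal.Quotient.mk Q (constantCoeff x) :=
      fun x => rfl
    have hψsurj : Function.Surjective ψ := by
      intro z
      obtain ⟨b, rfl⟩ := Ideal.Quotient.mk_surjective z
      exact ⟨C b, by rw [hψ, constantCoeff_C]⟩
    have hkerψ : RingHom.ker ψ = K' := by
      apply le_antisymm
      · intro x hx
        rw [RingHom.mem_ker, hψ, Ideal.Quotient.eq_zero_iff_mem] at hx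
        rw [hQdef, Ideal.mem_span_pair] at hx
        obtain ⟨a, b, hab⟩ := hx
        have hsplit : x = (x - C (constantCoeff x))
            + (C a * cb (g 0) + C b * cb (g (Fin.last m))) := by
          have : C (constantCoeff x)
              = C a * cb (g 0) + C b * cb (g (Fin.last m)) := by
            rw [← hab]
            show C _ = _
            rw [map_add, map_mul, map_mul]
            rfl
          rw [this]
          ring
        rw [hsplit]
        refine add_mem ?_ (add_mem (Ideal.mul_mem_left _ _ hg0K')
          (Ideal.mul_mem_left _ _ hgmK'))
        have hsub := sub_const_mem x
        have hle : Ideal.span {(MvPowerSeries.X 0 : Auvxy), MvPowerSeries.X 1} ≤ K' := by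
          rw [Ideal.span_le]
          rintro y hy
          simp only [Set.mem_insert_iff, Set.mem_singleton_iff] at hy
          rcases hy with rfl | rfl
          · exact hX0K'
          · exact hX1K'
        exact hle hsub
      · rw [hK'def, Ideal.span_le]
        intro x hx
        simp only [Set.mem_insert_iff, Set.mem_singleton_iff] at hx
        rcases hx with rfl | rfl | rfl | rfl
        · rw [SetLike.mem_coe, RingHom.mem_ker, hψ, constantCoeff_X, map_zero]
        · rw [SetLike.mem_coe, RingHom.mem_ker, hψ, constantCoeff_X, map_zero]
        · rw [SetLike.mem_coe, RingHom.mem_ker, hψ]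
          show Ideal.Quotient.mk Q (constantCoeff (C (g 0))) = 0
          rw [constantCoeff_C, Ideal.Quotient.eq_zero_iff_mem]
          exact Ideal.subset_span (by simp)
        · rw [SetLike.mem_coe, RingHom.mem_ker, hψ]
          show Ideal.Quotient.mk Q (constantCoeff (C (g (Fin.last m)))) = 0
          rw [constantCoeff_C, Ideal.Quotient.eq_zero_iff_mem]
          exact Ideal.subset_span (by simp)
    exact (Ideal.quotientEquivAlgOfEq ℂ hkerψ.symm).trans
      (Ideal.quotientKerAlgEquivOfSurjective hψsurj)
  have e1c : (I₁ ⧸ I₂') ≃ₗ[ℂ] (R ⧸ K) :=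
    { e1.toAddEquiv with
      map_smul' := by
        intro c x
        show e1 (c • x) = c • e1 x
        rw [← algebraMap_smul R c x, ← algebraMap_smul R c (e1 x), map_smul] }
  have r1 : Module.rank ℂ (I₁ ⧸ I₂') = Module.rank ℂ (R ⧸ K) :=
    LinearEquiv.rank_eq e1c
  have r2 : Module.rank ℂ (R ⧸ K) = Module.rank ℂ (Auvxy ⧸ K') :=
    e2.toLinearEquiv.rank_eq
  have r3 : Module.rank ℂ (Auvxy ⧸ K') = Module.rank ℂ (Bxy ⧸ Q) :=
    e3.toLinearEquiv.rank_eq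
  rw [r1, r2, r3]
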